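/- Let H be a separable complex Hilbert space and let P be a bounded idempotent operator on H (P² = P). Then 2P - I is invertible, and the absolute value |2P* - I| equals the inverse of the absolute value |2P - I|, i.e. |2P* - I| = |2P - I|⁻¹. -/

import Mathlib

open ContinuousLinearMap

variable {H : Type*} [NormedAddCommGroup H] [InnerProductSpace ℂ H]
  [CompleteSpace H] [TopologicalSpace.SeparableSpace H]

/-- The absolute value `|A| = (A*A)^(1/2)` of a bounded operator. -/
noncomputable def absOp (A : H →L[ℂ] H) : H →L[ℂ] H := CFC.sqrt (star A * A)

/-- A symmetry is a self-adjoint unitary: `J = J* = J⁻¹`. -/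
def IsSymmetry (J : H →L[ℂ] H) : Prop := IsSelfAdjoint J ∧ J * J = 1

theorem stmt_0 (P : H →L[ℂ] H) (hP : P * P = P) :
    IsUnit ((2 : ℂ) • P - 1) ∧
    absOp ((2 : ℂ) • star P - 1) = Ring.inverse (absOp ((2 : ℂ) • P - 1)) := by
  set T : H →L[ℂ] H := (2 : ℂ) • P - 1 with hT
  have hT2 : T * T = 1 := by
    rw [hT]
    simp only [mul_sub, sub_mul, one_mul, mul_one, smul_mul_assoc, mul_smul_comm, smul_smul, hP]
    module
  have hTs : star T = (2 : ℂ) • star P - 1 := by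
    simp [hT, star_sub, star_smul]
  have hS2 : star T * star T = 1 := by
    rw [← star_mul, hT2, star_one]
  set a : H →L[ℂ] H := star T * T with ha
  set b : H →L[ℂ] H := T * star T with hb
  have hab : a * b = 1 := by
    calc a * b = star T * (T * T) * star T := by rw [ha, hb]; noncomm_ring
    _ = 1 := by rw [hT2, mul_one, hS2]
  have hba : b * a = 1 := by
    calc b * a = T * (star T * star T) * T := by rw [ha, hb]; noncomm_ring
    _ = 1 := by rw [hS2, mul_one, hT2]
  have ha_pos : (0 : H →L[ℂ] H) ≤ a := star_mul_self_nonneg T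
  set sa : H →L[ℂ] H := CFC.sqrt a with hsa
  have hsa_pos : (0 : H →L[ℂ] H) ≤ sa := CFC.sqrt_nonneg a
  have hsa_sq : sa * sa = a := CFC.sqrt_mul_sqrt_self a ha_pos
  -- sa is a unit with inverse sa * b
  have hr : sa * (sa * b) = 1 := by rw [← mul_assoc, hsa_sq, hab]
  have hl : (b * sa) * sa = 1 := by rw [mul_assoc, hsa_sq, hba]
  have hlr : b * sa = sa * b := by
    calc b * sa = (b * sa) * (sa * (sa * b)) := by rw [hr, mul_one]
    _ = ((b * sa) * sa) * (sa * b) := (mul_assoc (b * sa) sa (sa * b)).symm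
    _ = sa * b := by rw [hl, one_mul]
  have hl' : (sa * b) * sa = 1 := by rw [← hlr]; exact hl
  set usa : (H →L[ℂ] H)ˣ := ⟨sa, sa * b, hr, hl'⟩ with husa
  have hrr : (sa * b) * (sa * b) = b := by
    nth_rewrite 1 [← hlr]
    rw [mul_assoc, hr, mul_one]
  have hr_pos : (0 : H →L[ℂ] H) ≤ sa * b := by
    have := CFC.inv_nonneg_of_nonneg usa hsa_pos
    exact this
  have hsb : CFC.sqrt b = sa * b := CFC.sqrt_unique hrr hr_pos
  refine ⟨⟨⟨T, T, hT2, hT2⟩, rfl⟩, ?_⟩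
  have hgoal : absOp ((2 : ℂ) • star P - 1) = CFC.sqrt b := by
    rw [absOp, ← hTs, star_star]
  rw [hgoal, hsb, absOp, ← ha, ← hsa]
  have : Ring.inverse (usa : H →L[ℂ] H) = ↑usa⁻¹ := Ring.inverse_unit usa
  exact this.symm
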